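/- Let Ω ⊂ RP^n be an open properly convex set and S the boundary of the convex body P obtained as the intersection of all affine half-spaces H (in the cone C(Ω) ⊂ R^{n+1}) such that the volume of the part of C(Ω) outside H equals 1. Then S meets every open ray of C(Ω) in exactly one point, and S is invariant under the subgroup SL(C(Ω)) of volume-preserving linear maps preserving C(Ω). -/

import Mathlib

open MeasureTheory Pointwise
open scoped RealInnerProductSpace

/-- A cone in `ℝ^{n+1}`: invariant under positive scaling. -/
def IsCone {n : ℕ} (C : Set (EuclideanSpace ℝ (Fin (n+1)))) : Prop :=
  ∀ t : ℝ, 0 < t → t • C = C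

/-- Sharpness: the closure contains no pair of antipodal nonzero vectors. -/
def IsSharp {n : ℕ} (C : Set (EuclideanSpace ℝ (Fin (n+1)))) : Prop :=
  ∀ v : EuclideanSpace ℝ (Fin (n+1)), v ≠ 0 → v ∈ closure C → -v ∉ closure C

/-- Vinberg's convex body `P`: the intersection of all affine half-spaces
`{x : ⟪x,v⟫ ≥ c}` such that the volume of the part of the cone `C` outside the
half-space equals `1`. -/
def VinbergBody {n : ℕ} (C : Set (EuclideanSpace ℝ (Fin (n+1)))) :
    Set (EuclideanSpace ℝ (Fin (n+1))) :=
  {x | ∀ (v : EuclideanSpace ℝ (Fin (n+1))) (c : ℝ),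
    volume (C ∩ {y | ⟪y, v⟫ < c}) = 1 → c ≤ ⟪x, v⟫}

namespace VinbergAux

open scoped ENNReal

variable {n : ℕ} {C : Set (EuclideanSpace ℝ (Fin (n+1)))}

lemma smul_mem_cone (hCc : IsCone C) {y : EuclideanSpace ℝ (Fin (n+1))} (hy : y ∈ C)
    {t : ℝ} (ht : 0 < t) : t • y ∈ C := by
  rw [← hCc t ht]; exact Set.smul_mem_smul_set hy

lemma smul_slice (hCc : IsCone C) (v : EuclideanSpace ℝ (Fin (n+1))) (c : ℝ) {t : ℝ}
    (ht : 0 < t) :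
    t • (C ∩ {y | ⟪y, v⟫ < c}) = C ∩ {y | ⟪y, v⟫ < t * c} := by
  rw [Set.smul_set_inter₀ (ne_of_gt ht), hCc t ht]
  congr 1
  ext y
  rw [Set.mem_smul_set_iff_inv_smul_mem₀ (ne_of_gt ht)]
  simp only [Set.mem_setOf_eq, real_inner_smul_left]
  exact inv_mul_lt_iff₀ ht

lemma volume_smul (s : Set (EuclideanSpace ℝ (Fin (n+1)))) {t : ℝ} (ht : 0 < t) :
    volume (t • s) = ENNReal.ofReal (t ^ (n+1)) * volume s := by
  rw [Measure.addHaar_smul, finrank_euclideanSpace_fin, abs_of_nonneg (by positivity)]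

lemma two_le_pow : (2:ℝ) ≤ 2 ^ (n+1) := by
  calc (2:ℝ) = 2 ^ 1 := (pow_one 2).symm
  _ ≤ 2 ^ (n+1) := by
    apply pow_le_pow_right₀ one_le_two
    omega

lemma volume_infinite_of_cone {s : Set (EuclideanSpace ℝ (Fin (n+1)))}
    (ho : IsOpen s) (hne : s.Nonempty) (hc : (2:ℝ) • s = s) : volume s = ∞ := by
  by_contra h
  have h0 : volume s ≠ 0 := (ho.measure_pos volume hne).ne'
  have heq := volume_smul s (t := 2) two_pos
  rw [hc] at heq
  have h1 : (volume s).toReal = 2 ^ (n+1) * (volume s).toReal := by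
    conv_lhs => rw [heq]
    rw [ENNReal.toReal_mul, ENNReal.toReal_ofReal (by positivity)]
  have h2 : 0 < (volume s).toReal := ENNReal.toReal_pos h0 h
  nlinarith [two_le_pow (n := n)]

lemma zero_not_mem (hCo : IsOpen C) (hsharp : IsSharp C) : (0 : EuclideanSpace ℝ (Fin (n+1))) ∉ C := by
  intro h0
  obtain ⟨ρ, hρ, hball⟩ := Metric.isOpen_iff.1 hCo 0 h0
  set u : EuclideanSpace ℝ (Fin (n+1)) := EuclideanSpace.single 0 (ρ/2) with hu
  have hnu : ‖u‖ = ρ/2 := by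
    rw [hu, EuclideanSpace.norm_single, Real.norm_eq_abs, abs_of_pos (by linarith)]
  have huC : u ∈ C := hball (by simp [Metric.mem_ball, dist_zero_right, hnu]; linarith)
  have hnuC : -u ∈ C := hball (by simp [Metric.mem_ball, dist_zero_right, hnu]; linarith)
  have hune : u ≠ 0 := by
    intro h
    rw [h, norm_zero] at hnu
    linarith
  exact hsharp u hune (subset_closure huC) (subset_closure hnuC)

lemma adm_props (hCo : IsOpen C) (hCc : IsCone C) {v : EuclideanSpace ℝ (Fin (n+1))} {c : ℝ}
    (h : volume (C ∩ {y | ⟪y, v⟫ < c}) = 1) :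
    0 < c ∧ (∀ x ∈ C, 0 ≤ ⟪x, v⟫) ∧ v ≠ 0 := by
  have hCne : C.Nonempty := by
    by_contra hemp
    rw [Set.not_nonempty_iff_eq_empty] at hemp
    rw [hemp] at h
    simp at h
  -- c > 0
  have hc : 0 < c := by
    by_contra hc
    push_neg at hc
    have hsub : (2:ℝ) • (C ∩ {y | ⟪y, v⟫ < c}) ⊆ C ∩ {y | ⟪y, v⟫ < c} := by
      rw [smul_slice hCc v c two_pos]
      apply Set.inter_subset_inter_right
      intro y hy
      simp only [Set.mem_setOf_eq] at hy ⊢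
      nlinarith
    have hmono : volume ((2:ℝ) • (C ∩ {y | ⟪y, v⟫ < c})) ≤ volume (C ∩ {y | ⟪y, v⟫ < c}) :=
      measure_mono hsub
    rw [volume_smul _ two_pos, h, mul_one] at hmono
    have h2 : (2:ENNReal) ≤ ENNReal.ofReal (2 ^ (n+1)) := by
      rw [show (2:ENNReal) = ENNReal.ofReal 2 by simp]
      exact ENNReal.ofReal_le_ofReal two_le_pow
    have : (2:ENNReal) ≤ 1 := le_trans h2 hmono
    norm_num at this
  refine ⟨hc, ?_, ?_⟩
  · intro x hx
    by_contra hneg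
    push_neg at hneg
    have hUopen : IsOpen (C ∩ {y | ⟪y, v⟫ < 0}) :=
      hCo.inter (isOpen_lt (continuous_id.inner continuous_const) continuous_const)
    have hUne : (C ∩ {y | ⟪y, v⟫ < 0}).Nonempty := ⟨x, hx, hneg⟩
    have hUcone : (2:ℝ) • (C ∩ {y | ⟪y, v⟫ < 0}) = C ∩ {y | ⟪y, v⟫ < 0} := by
      rw [smul_slice hCc v 0 two_pos, mul_zero]
    have hUinf := volume_infinite_of_cone hUopen hUne hUcone
    have hsub : C ∩ {y | ⟪y, v⟫ < 0} ⊆ C ∩ {y | ⟪y, v⟫ < c} :=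
      Set.inter_subset_inter_right _ (fun y hy => lt_trans hy hc)
    have hcontra : volume (C ∩ {y | ⟪y, v⟫ < 0}) ≤ volume (C ∩ {y | ⟪y, v⟫ < c}) :=
      measure_mono hsub
    rw [hUinf, h] at hcontra
    simp at hcontra
  · intro hv0
    rw [hv0] at h
    have : {y : EuclideanSpace ℝ (Fin (n+1)) | ⟪y, (0:EuclideanSpace ℝ (Fin (n+1)))⟫ < c} = Set.univ := by
      ext y; simp [hc]
    rw [this, Set.inter_univ] at h
    have := volume_infinite_of_cone hCo hCne (hCc 2 two_pos)
    rw [this] at h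
    simp at h

lemma inner_ge_ball {x v : EuclideanSpace ℝ (Fin (n+1))} {r : ℝ} (hr : 0 < r)
    (hball : Metric.ball x r ⊆ C) (hpos : ∀ z ∈ C, 0 ≤ ⟪z, v⟫) :
    r * ‖v‖ ≤ ⟪x, v⟫ := by
  rcases eq_or_ne v 0 with rfl | hv
  · simp
  have hvn : 0 < ‖v‖ := norm_pos_iff.2 hv
  have hx0 : 0 ≤ ⟪x, v⟫ := hpos x (hball (Metric.mem_ball_self hr))
  by_contra hlt
  push_neg at hlt
  set r' : ℝ := (⟪x, v⟫ / ‖v‖ + r) / 2 with hr'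
  have h1 : ⟪x, v⟫ / ‖v‖ < r := by
    rw [div_lt_iff₀ hvn]; linarith
  have hr'pos : 0 < r' := by
    have : 0 ≤ ⟪x, v⟫ / ‖v‖ := div_nonneg hx0 hvn.le
    rw [hr']; linarith
  have hr'lt : r' < r := by rw [hr']; linarith
  have hr'gt : ⟪x, v⟫ / ‖v‖ < r' := by rw [hr']; linarith
  set z : EuclideanSpace ℝ (Fin (n+1)) := x - (r' * ‖v‖⁻¹) • v with hz
  have hzC : z ∈ C := by
    apply hball
    rw [Metric.mem_ball, dist_eq_norm, hz]
    have he : x - (r' * ‖v‖⁻¹) • v - x = -((r' * ‖v‖⁻¹) • v) := by abel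
    rw [he, norm_neg, norm_smul, Real.norm_eq_abs, abs_of_pos (by positivity),
      mul_assoc, inv_mul_cancel₀ hvn.ne', mul_one]
    exact hr'lt
  have hzv : ⟪z, v⟫ < 0 := by
    rw [hz, inner_sub_left, real_inner_smul_left, real_inner_self_eq_norm_sq]
    have h3 : r' * ‖v‖⁻¹ * ‖v‖ ^ 2 = r' * ‖v‖ := by
      field_simp
    rw [h3]
    have h4 : ⟪x, v⟫ < r' * ‖v‖ := by
      have h5 := mul_lt_mul_of_pos_right hr'gt hvn
      rwa [div_mul_cancel₀ _ hvn.ne'] at h5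
    linarith
  exact absurd (hpos z hzC) (not_le.2 hzv)

/-- The closure of the cone as a `ConvexCone`. -/
lemma closure_cone_smul (hCc : IsCone C) {t : ℝ} (ht : 0 < t)
    {x : EuclideanSpace ℝ (Fin (n+1))} (hx : x ∈ closure C) : t • x ∈ closure C := by
  have h : t • closure C = closure (t • C) := by
    exact (closure_smul₀' (ne_of_gt ht) C).symm
  have : t • x ∈ t • closure C := Set.smul_mem_smul_set hx
  rw [h, hCc t ht] at this
  exact this

/-- Separation: there is a functional strictly positive on `closure C \ {0}`. -/
lemma exists_dual_interior (hCo : IsOpen C) (hCc : IsCone C) (hconv : Convex ℝ C)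
    (hsharp : IsSharp C) (hne : C.Nonempty) :
    ∃ v : EuclideanSpace ℝ (Fin (n+1)), ∃ δ : ℝ, 0 < δ ∧
      ∀ x ∈ closure C, δ * ‖x‖ ≤ ⟪x, v⟫ := by
  classical
  -- closure C as a convex cone
  set K : ConvexCone ℝ (EuclideanSpace ℝ (Fin (n+1))) :=
    { carrier := closure C
      smul_mem' := fun c hc x hx => closure_cone_smul hCc hc hx
      add_mem' := by
        intro x hx y hy
        have hmid : (1/2 : ℝ) • x + (1/2 : ℝ) • y ∈ closure C :=
          (hconv.closure) hx hy (by norm_num : (0:ℝ) ≤ 1/2)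
            (by norm_num : (0:ℝ) ≤ 1/2) (by norm_num : (1/2:ℝ) + 1/2 = 1)
        have h2 := closure_cone_smul hCc (t := 2) two_pos hmid
        have heq : (2:ℝ) • ((1/2 : ℝ) • x + (1/2 : ℝ) • y) = x + y := by
          rw [smul_add, smul_smul, smul_smul]; norm_num
        rwa [heq] at h2 } with hK
  have hKset : (K : Set (EuclideanSpace ℝ (Fin (n+1)))) = closure C := rfl
  have hKne : (K : Set (EuclideanSpace ℝ (Fin (n+1)))).Nonempty := by
    rw [hKset]; exact hne.closure
  have hKclosed : IsClosed (K : Set (EuclideanSpace ℝ (Fin (n+1)))) := isClosed_closure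
  set Dset : Set (EuclideanSpace ℝ (Fin (n+1))) :=
    (ProperCone.innerDual (closure C) : Set (EuclideanSpace ℝ (Fin (n+1)))) with hD
  have hdd : (ProperCone.innerDual Dset : Set (EuclideanSpace ℝ (Fin (n+1)))) = closure C := by
    have this : (ProperCone.innerDual (ProperCone.innerDual (closure C) :
        Set (EuclideanSpace ℝ (Fin (n+1)))) :
        Set (EuclideanSpace ℝ (Fin (n+1)))) = closure C :=
      by
        have h := congrArg SetLike.coe (ProperCone.innerDual_innerDual
          (⟨K.toPointedCone (ConvexCone.Pointed.of_nonempty_of_isClosed hKne hKclosed),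
            hKclosed⟩ : ProperCone ℝ (EuclideanSpace ℝ (Fin (n+1)))))
        exact h
    rw [hD]
    exact this
  -- interior of Dset is nonempty
  have hint : (interior Dset).Nonempty := by
    by_contra hempty
    rw [Set.not_nonempty_iff_eq_empty] at hempty
    have hconvD : Convex ℝ Dset := (ProperCone.innerDual (closure C)).convex
    have hspan : affineSpan ℝ Dset ≠ ⊤ := by
      intro htop
      have := (hconvD.interior_nonempty_iff_affineSpan_eq_top).2 htop
      rw [hempty] at this
      exact Set.not_nonempty_empty this
    have h0D : (0 : EuclideanSpace ℝ (Fin (n+1))) ∈ Dset := (ProperCone.innerDual (closure C)).zero_mem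
    have hDne : Dset.Nonempty := ⟨0, h0D⟩
    have hvs : vectorSpan ℝ Dset ≠ ⊤ := by
      intro htop
      exact hspan ((AffineSubspace.affineSpan_eq_top_iff_vectorSpan_eq_top_of_nonempty ℝ
        (EuclideanSpace ℝ (Fin (n+1))) (EuclideanSpace ℝ (Fin (n+1))) hDne).2 htop)
    have horth : (vectorSpan ℝ Dset)ᗮ ≠ ⊥ := by
      intro hbot
      exact hvs (Submodule.orthogonal_eq_bot_iff.1 hbot)
    obtain ⟨w, hwmem, hw0⟩ := Submodule.exists_mem_ne_zero_of_ne_bot horth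
    have hwperp : ∀ u ∈ Dset, ⟪u, w⟫ = 0 := by
      intro u hu
      have hmem : u ∈ vectorSpan ℝ Dset := by
        have := vsub_mem_vectorSpan ℝ hu h0D
        simpa using this
      exact ((vectorSpan ℝ Dset).mem_orthogonal w).1 hwmem u hmem
    have hwK : w ∈ ProperCone.innerDual Dset := by
      rw [ProperCone.mem_innerDual]
      intro u hu
      rw [hwperp u hu]
    have hnwK : -w ∈ ProperCone.innerDual Dset := by
      rw [ProperCone.mem_innerDual]
      intro u hu
      rw [inner_neg_right, hwperp u hu, neg_zero]
    have hwC : w ∈ closure C := by rw [← hdd]; exact hwK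
    have hnwC : -w ∈ closure C := by rw [← hdd]; exact hnwK
    exact hsharp w hw0 hwC hnwC
  obtain ⟨v, hv⟩ := hint
  obtain ⟨ε, hε, hball⟩ := Metric.isOpen_iff.1 isOpen_interior v hv
  refine ⟨v, ε/2, by linarith, ?_⟩
  intro x hx
  rcases eq_or_ne x 0 with rfl | hx0
  · simp
  have hxn : 0 < ‖x‖ := norm_pos_iff.2 hx0
  set u : EuclideanSpace ℝ (Fin (n+1)) := v - ((ε/2) * ‖x‖⁻¹) • x with hu
  have huD : u ∈ Dset := by
    apply interior_subset
    apply hball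
    rw [Metric.mem_ball, dist_eq_norm, hu]
    have : v - ((ε/2) * ‖x‖⁻¹) • x - v = -(((ε/2) * ‖x‖⁻¹) • x) := by abel
    rw [this, norm_neg, norm_smul, Real.norm_eq_abs, abs_of_pos (by positivity)]
    rw [mul_assoc, inv_mul_cancel₀ hxn.ne', mul_one]
    linarith
  have h0 : 0 ≤ ⟪x, u⟫ := by
    rw [hD, SetLike.mem_coe, ProperCone.mem_innerDual] at huD
    exact huD hx
  rw [hu, inner_sub_right, real_inner_smul_right, real_inner_self_eq_norm_sq] at h0
  have heq : ε/2 * ‖x‖⁻¹ * ‖x‖^2 = ε/2 * ‖x‖ := by field_simp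
  rw [heq] at h0
  linarith

lemma body_closed : IsClosed (VinbergBody C) := by
  have heq : VinbergBody C = ⋂ (v : EuclideanSpace ℝ (Fin (n+1))) (c : ℝ)
      (_ : volume (C ∩ {y | ⟪y, v⟫ < c}) = 1), {x | c ≤ ⟪x, v⟫} := by
    ext x
    simp only [VinbergBody, Set.mem_setOf_eq, Set.mem_iInter]
  rw [heq]
  exact isClosed_iInter fun v => isClosed_iInter fun c => isClosed_iInter fun _ =>
    isClosed_le continuous_const (continuous_id.inner continuous_const)

lemma add_mem_interior (hCo : IsOpen C) (hCc : IsCone C)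
    {x z : EuclideanSpace ℝ (Fin (n+1))} (hx : x ∈ VinbergBody C) (hz : z ∈ C) :
    x + z ∈ interior (VinbergBody C) := by
  obtain ⟨ρ, hρ, hball⟩ := Metric.isOpen_iff.1 hCo z hz
  rw [mem_interior]
  refine ⟨Metric.ball (x + z) ρ, ?_, Metric.isOpen_ball, Metric.mem_ball_self hρ⟩
  intro w hw
  intro v c hadm
  have hnonneg := (adm_props hCo hCc hadm).2.1
  have hwz : w - x ∈ C := by
    apply hball
    rw [Metric.mem_ball, dist_eq_norm]
    rw [Metric.mem_ball, dist_eq_norm] at hw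
    have : w - x - z = w - (x + z) := by abel
    rwa [this]
  have h1 : c ≤ ⟪x, v⟫ := hx v c hadm
  have h2 : 0 ≤ ⟪w - x, v⟫ := hnonneg _ hwz
  have : ⟪w, v⟫ = ⟪x, v⟫ + ⟪w - x, v⟫ := by
    rw [← inner_add_left]
    congr 1
    abel
  linarith

lemma exists_adm (hCo : IsOpen C) (hCc : IsCone C) (hconv : Convex ℝ C)
    (hsharp : IsSharp C) (hne : C.Nonempty) :
    ∃ (v : EuclideanSpace ℝ (Fin (n+1))) (c : ℝ),
      volume (C ∩ {y | ⟪y, v⟫ < c}) = 1 := by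
  obtain ⟨v, δ, hδ, hpos⟩ := exists_dual_interior hCo hCc hconv hsharp hne
  obtain ⟨y, hy⟩ := hne
  have hy0 : y ≠ 0 := fun h => zero_not_mem hCo hsharp (h ▸ hy)
  have hyv : 0 < ⟪y, v⟫ :=
    lt_of_lt_of_le (mul_pos hδ (norm_pos_iff.2 hy0)) (hpos y (subset_closure hy))
  set A : Set (EuclideanSpace ℝ (Fin (n+1))) := C ∩ {z | ⟪z, v⟫ < 1} with hA
  have hAopen : IsOpen A :=
    hCo.inter (isOpen_lt (continuous_id.inner continuous_const) continuous_const)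
  have hAne : A.Nonempty := by
    refine ⟨(2 * ⟪y, v⟫)⁻¹ • y, smul_mem_cone hCc hy (inv_pos.2 (by linarith)), ?_⟩
    simp only [Set.mem_setOf_eq, real_inner_smul_left]
    rw [inv_mul_lt_iff₀ (by linarith)]
    linarith
  have hAbd : A ⊆ Metric.ball 0 (1/δ) := by
    intro z ⟨hzC, hzv⟩
    rw [Metric.mem_ball, dist_zero_right]
    have := hpos z (subset_closure hzC)
    simp only [Set.mem_setOf_eq] at hzv
    rw [lt_div_iff₀ hδ]
    nlinarith
  have hW0 : volume A ≠ 0 := (hAopen.measure_pos volume hAne).ne'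
  have hWtop : volume A ≠ ⊤ :=
    (lt_of_le_of_lt (measure_mono hAbd) measure_ball_lt_top).ne
  set w : ℝ := (volume A).toReal with hw
  have hwpos : 0 < w := ENNReal.toReal_pos hW0 hWtop
  set c : ℝ := (w⁻¹) ^ ((1:ℝ)/(n+1)) with hc
  have hcpos : 0 < c := Real.rpow_pos_of_pos (inv_pos.2 hwpos) _
  refine ⟨v, c, ?_⟩
  have hslice : C ∩ {y | ⟪y, v⟫ < c} = c • A := by
    rw [hA, smul_slice hCc v 1 hcpos, mul_one]
  rw [hslice, volume_smul A hcpos]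
  have hcpow : c ^ (n+1) = w⁻¹ := by
    rw [hc, ← Real.rpow_natCast ((w⁻¹) ^ ((1:ℝ)/(n+1))) (n+1),
      ← Real.rpow_mul (le_of_lt (inv_pos.2 hwpos))]
    have hmul : (1:ℝ)/(n+1) * ((n+1 : ℕ) : ℝ) = 1 := by
      push_cast
      field_simp
    rw [hmul, Real.rpow_one]
  rw [hcpow]
  have hvolA : volume A = ENNReal.ofReal w := by
    rw [hw, ENNReal.ofReal_toReal hWtop]
  rw [hvolA, ← ENNReal.ofReal_mul (by positivity), inv_mul_cancel₀ hwpos.ne']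
  simp

lemma exists_upper (hCo : IsOpen C) (hCc : IsCone C) (hsharp : IsSharp C)
    {y : EuclideanSpace ℝ (Fin (n+1))} (hy : y ∈ C) :
    ∃ T : ℝ, 0 < T ∧ T • y ∈ VinbergBody C := by
  obtain ⟨r, hr, hball⟩ := Metric.isOpen_iff.1 hCo y hy
  have hB : (C ∩ Metric.ball 0 1).Nonempty := by
    have hy0 : y ≠ 0 := fun h => zero_not_mem hCo hsharp (h ▸ hy)
    have hyn : 0 < ‖y‖ := norm_pos_iff.2 hy0
    refine ⟨(2 * ‖y‖)⁻¹ • y, smul_mem_cone hCc hy (by positivity), ?_⟩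
    rw [Metric.mem_ball, dist_zero_right, norm_smul, Real.norm_eq_abs,
      abs_of_pos (by positivity)]
    rw [inv_mul_lt_iff₀ (by positivity)]
    linarith
  have hBopen : IsOpen (C ∩ Metric.ball 0 1) := hCo.inter Metric.isOpen_ball
  have hV0 : volume (C ∩ Metric.ball 0 1) ≠ 0 := (hBopen.measure_pos volume hB).ne'
  have hVtop : volume (C ∩ Metric.ball 0 1) ≠ ⊤ :=
    (lt_of_le_of_lt (measure_mono Set.inter_subset_right) measure_ball_lt_top).ne
  set w : ℝ := (volume (C ∩ Metric.ball 0 1)).toReal with hw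
  have hwpos : 0 < w := ENNReal.toReal_pos hV0 hVtop
  set R : ℝ := max 1 (2/w) with hR
  have hRpos : 0 < R := lt_of_lt_of_le one_pos (le_max_left _ _)
  refine ⟨R / r, by positivity, ?_⟩
  intro v c hadm
  obtain ⟨hc, hnonneg, hv0⟩ := adm_props hCo hCc hadm
  have hvn : 0 < ‖v‖ := norm_pos_iff.2 hv0
  have hyv : r * ‖v‖ ≤ ⟪y, v⟫ := inner_ge_ball hr hball hnonneg
  have hkey : c ≤ R * ‖v‖ := by
    by_contra hgt
    push_neg at hgt
    have hsub : C ∩ Metric.ball 0 R ⊆ C ∩ {z | ⟪z, v⟫ < c} := by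
      intro z ⟨hzC, hzb⟩
      rw [Metric.mem_ball, dist_zero_right] at hzb
      refine ⟨hzC, ?_⟩
      simp only [Set.mem_setOf_eq]
      calc ⟪z, v⟫ ≤ ‖z‖ * ‖v‖ := real_inner_le_norm z v
      _ ≤ R * ‖v‖ := by nlinarith
      _ < c := hgt
    have hballs : C ∩ Metric.ball 0 R = R • (C ∩ Metric.ball 0 1) := by
      rw [Set.smul_set_inter₀ (ne_of_gt hRpos), hCc R hRpos, smul_unitBall_of_pos hRpos]
    have hmono : volume (C ∩ Metric.ball 0 R) ≤ volume (C ∩ {z | ⟪z, v⟫ < c}) :=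
      measure_mono hsub
    rw [hadm, hballs, volume_smul _ hRpos] at hmono
    have hvol : volume (C ∩ Metric.ball 0 1) = ENNReal.ofReal w :=
      (ENNReal.ofReal_toReal hVtop).symm
    rw [hvol, ← ENNReal.ofReal_mul (by positivity)] at hmono
    have h2 : (2:ℝ) ≤ R ^ (n+1) * w := by
      have hR1 : (1:ℝ) ≤ R := le_max_left _ _
      have hR2 : 2/w ≤ R := le_max_right _ _
      have hRn : R ≤ R ^ (n+1) := by
        calc R = R ^ 1 := (pow_one R).symm
        _ ≤ R ^ (n+1) := pow_le_pow_right₀ hR1 (by omega)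
      have : 2/w ≤ R ^ (n+1) := le_trans hR2 hRn
      rw [div_le_iff₀ hwpos] at this
      linarith
    have : (2:ENNReal) ≤ 1 := by
      calc (2:ENNReal) = ENNReal.ofReal 2 := by simp
      _ ≤ ENNReal.ofReal (R ^ (n+1) * w) := ENNReal.ofReal_le_ofReal h2
      _ ≤ 1 := hmono
    norm_num at this
  calc c ≤ R * ‖v‖ := hkey
  _ = (R / r) * (r * ‖v‖) := by field_simp
  _ ≤ (R / r) * ⟪y, v⟫ := by
      apply mul_le_mul_of_nonneg_left hyv (by positivity)
  _ = ⟪(R / r) • y, v⟫ := (real_inner_smul_left _ _ _).symm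

lemma mem_body_map (hCo : IsOpen C)
    (g : EuclideanSpace ℝ (Fin (n+1)) ≃ₗ[ℝ] EuclideanSpace ℝ (Fin (n+1)))
    (hg : (⇑g) '' C = C) (hmp : MeasurePreserving (⇑g) volume volume)
    {x : EuclideanSpace ℝ (Fin (n+1))} (hx : x ∈ VinbergBody C) :
    g x ∈ VinbergBody C := by
  intro v c hadm
  have hpre : ⇑g ⁻¹' C = C := by
    conv_lhs => rw [← hg]
    exact Set.preimage_image_eq C g.injective
  have hav : ∀ y : EuclideanSpace ℝ (Fin (n+1)),
      ⟪y, LinearMap.adjoint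
        (g : EuclideanSpace ℝ (Fin (n+1)) →ₗ[ℝ] EuclideanSpace ℝ (Fin (n+1))) v⟫
        = ⟪g y, v⟫ := by
    intro y
    rw [real_inner_comm, LinearMap.adjoint_inner_left]
    exact real_inner_comm (g y) v
  set av := LinearMap.adjoint
    (g : EuclideanSpace ℝ (Fin (n+1)) →ₗ[ℝ] EuclideanSpace ℝ (Fin (n+1))) v with hav'
  have hpre2 : ⇑g ⁻¹' (C ∩ {y | ⟪y, v⟫ < c}) = C ∩ {y | ⟪y, av⟫ < c} := by
    ext y
    simp only [Set.mem_preimage, Set.mem_inter_iff, Set.mem_setOf_eq]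
    constructor
    · rintro ⟨h1, h2⟩
      have h1' : y ∈ C := by rw [← hpre]; exact h1
      exact ⟨h1', by rw [hav']; rw [hav y]; exact h2⟩
    · rintro ⟨h1, h2⟩
      have h1' : g y ∈ C := by rw [← hpre] at h1; exact h1
      refine ⟨h1', ?_⟩
      rw [hav', hav y] at h2
      exact h2
  have hmeas : MeasurableSet (C ∩ {y | ⟪y, v⟫ < c}) :=
    (hCo.inter (isOpen_lt (continuous_id.inner continuous_const) continuous_const)).measurableSet
  have hadm' : volume (C ∩ {y | ⟪y, av⟫ < c}) = 1 := by
    rw [← hpre2, hmp.measure_preimage hmeas.nullMeasurableSet, hadm]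
  have h5 := hx av c hadm'
  rw [hav', hav x] at h5
  exact h5

end VinbergAux

open VinbergAux

/-- **The Vinberg hypersurface.** For an open properly convex cone `C ⊂ ℝ^{n+1}`, the
hypersurface `S = ∂P` (boundary of the Vinberg body) meets every open ray of `C` in
exactly one point, and is invariant under every volume-preserving linear automorphism
of the cone (the group `SL(C)`). -/
theorem vinberg_hypersurface (n : ℕ) (C : Set (EuclideanSpace ℝ (Fin (n+1))))
    (hCo : IsOpen C) (hCc : IsCone C) (hconv : Convex ℝ C) (hsharp : IsSharp C)
    (hne : C.Nonempty) :
    (∀ y ∈ C, ∃! t : ℝ, 0 < t ∧ t • y ∈ frontier (VinbergBody C)) ∧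
    (∀ g : EuclideanSpace ℝ (Fin (n+1)) ≃ₗ[ℝ] EuclideanSpace ℝ (Fin (n+1)),
      (⇑g) '' C = C → MeasurePreserving (⇑g) volume volume →
      (⇑g) '' frontier (VinbergBody C) = frontier (VinbergBody C)) := by
  have hPclosed : IsClosed (VinbergBody C) := body_closed
  constructor
  · -- rays
    intro y hy
    obtain ⟨r, hr, hball⟩ := Metric.isOpen_iff.1 hCo y hy
    obtain ⟨T, hT, hTmem⟩ := exists_upper hCo hCc hsharp hy
    obtain ⟨v₀, c₀, hadm₀⟩ := exists_adm hCo hCc hconv hsharp hne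
    obtain ⟨hc₀, hnn₀, hv₀⟩ := adm_props hCo hCc hadm₀
    have hy0 : y ≠ 0 := fun h => zero_not_mem hCo hsharp (h ▸ hy)
    have hyn : 0 < ‖y‖ := norm_pos_iff.2 hy0
    have hyv₀ : 0 < ⟪y, v₀⟫ :=
      lt_of_lt_of_le (mul_pos hr (norm_pos_iff.2 hv₀)) (inner_ge_ball hr hball hnn₀)
    set S : Set ℝ := {t | t • y ∈ VinbergBody C} with hS
    have hSne : S.Nonempty := ⟨T, hTmem⟩
    have hlb : ∀ t ∈ S, c₀ / ⟪y, v₀⟫ ≤ t := by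
      intro t ht
      have := ht v₀ c₀ hadm₀
      rw [real_inner_smul_left] at this
      rw [div_le_iff₀ hyv₀]
      linarith
    have hSbdd : BddBelow S := ⟨c₀ / ⟪y, v₀⟫, hlb⟩
    have hSclosed : IsClosed S :=
      hPclosed.preimage (continuous_id.smul continuous_const)
    set t₀ : ℝ := sInf S with ht₀
    have ht₀S : t₀ ∈ S := hSclosed.csInf_mem hSne hSbdd
    have ht₀pos : 0 < t₀ :=
      lt_of_lt_of_le (by positivity) (le_csInf hSne hlb)
    refine ⟨t₀, ⟨ht₀pos, ?_⟩, ?_⟩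
    · -- frontier membership
      rw [hPclosed.frontier_eq]
      refine ⟨ht₀S, ?_⟩
      intro hint
      obtain ⟨ε, hε, hballP⟩ := Metric.isOpen_iff.1 isOpen_interior _ hint
      set t' : ℝ := t₀ - ε / (2 * ‖y‖) with ht'
      have ht'S : t' ∈ S := by
        have hmem : t' • y ∈ interior (VinbergBody C) := by
          apply hballP
          rw [Metric.mem_ball, dist_eq_norm, ← sub_smul, norm_smul, Real.norm_eq_abs]
          have habs : |t' - t₀| = ε / (2 * ‖y‖) := by
            rw [ht']
            have he : t₀ - ε / (2 * ‖y‖) - t₀ = -(ε / (2 * ‖y‖)) := by ring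
            rw [he, abs_neg, abs_of_pos (div_pos hε (by linarith))]
          rw [habs, div_mul_eq_mul_div, div_lt_iff₀ (by linarith)]
          nlinarith
        simp only [hS, Set.mem_setOf_eq]
        exact interior_subset hmem
      have := csInf_le hSbdd ht'S
      rw [← ht₀] at this
      rw [ht'] at this
      have hpos : 0 < ε / (2 * ‖y‖) := by positivity
      linarith
    · -- uniqueness
      rintro t ⟨htpos, htf⟩
      have htP : t • y ∈ VinbergBody C := by
        rw [hPclosed.frontier_eq] at htf
        exact htf.1
      have htS : t ∈ S := htP
      have ht₀le : t₀ ≤ t := csInf_le hSbdd htS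
      rcases lt_or_eq_of_le ht₀le with hlt | heq
      · exfalso
        have hz : (t - t₀) • y ∈ C := smul_mem_cone hCc hy (by linarith)
        have : t₀ • y + (t - t₀) • y ∈ interior (VinbergBody C) :=
          add_mem_interior hCo hCc ht₀S hz
        rw [← add_smul] at this
        have heq2 : t₀ + (t - t₀) = t := by ring
        rw [heq2] at this
        rw [hPclosed.frontier_eq] at htf
        exact htf.2 this
      · exact heq.symm
  · -- invariance
    intro g hg hmp
    have hmeasg : Measurable ⇑g := hmp.measurable
    have hmeasgs : Measurable ⇑g.symm :=
      (LinearMap.continuous_of_finiteDimensional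
        (g.symm : EuclideanSpace ℝ (Fin (n+1)) →ₗ[ℝ] EuclideanSpace ℝ (Fin (n+1)))).measurable
    have hgs : (⇑g.symm) '' C = C := by
      have h1 : ⇑g.symm '' (⇑g '' C) = C := by
        rw [← Set.image_comp]
        have : ⇑g.symm ∘ ⇑g = id := by funext x; simp
        rw [this, Set.image_id]
      rw [hg] at h1
      exact h1
    have hmps : MeasurePreserving (⇑g.symm) volume volume := by
      refine ⟨hmeasgs, ?_⟩
      conv_lhs => rw [← hmp.map_eq]
      rw [Measure.map_map hmeasgs hmeasg]
      have : ⇑g.symm ∘ ⇑g = id := by funext x; simp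
      rw [this, Measure.map_id]
    have hPimg : ⇑g '' VinbergBody C = VinbergBody C := by
      apply Set.Subset.antisymm
      · rintro _ ⟨x, hx, rfl⟩
        exact mem_body_map hCo g hg hmp hx
      · intro x hx
        refine ⟨g.symm x, mem_body_map hCo g.symm hgs hmps hx, by simp⟩
    set h : EuclideanSpace ℝ (Fin (n+1)) ≃ₜ EuclideanSpace ℝ (Fin (n+1)) :=
      g.toContinuousLinearEquiv.toHomeomorph with hh
    have hcoe : ⇑h = ⇑g := rfl
    calc ⇑g '' frontier (VinbergBody C) = ⇑h '' frontier (VinbergBody C) := by rw [hcoe]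
    _ = frontier (⇑h '' VinbergBody C) := h.image_frontier _
    _ = frontier (VinbergBody C) := by rw [hcoe, hPimg]
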